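/- If H is an induced subgraph of a simple graph G of order n, then for every real a, the number of signless Laplacian eigenvalues of H in [a, ∞) is at most the number of signless Laplacian eigenvalues of G in [a, ∞). -/

import Mathlib

open Finset
open scoped Classical

/-- The signless Laplacian matrix `Q(G) = D(G) + A(G)` of a simple graph. -/
noncomputable def sLap {V : Type*} [Fintype V] [DecidableEq V] (G : SimpleGraph V) :
    Matrix V V ℝ :=
  Matrix.diagonal (fun v => (G.degree v : ℝ)) + G.adjMatrix ℝ

/-- Number of eigenvalues (with multiplicity) of a Hermitian matrix lying in a set. -/
noncomputable def eigCount {V : Type*} [Fintype V] [DecidableEq V]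
    {M : Matrix V V ℝ} (hM : M.IsHermitian) (s : Set ℝ) : ℕ :=
  (Finset.univ.filter fun i => hM.eigenvalues i ∈ s).card

open scoped RealInnerProductSpace

section Aux

variable {m : Type*} [Fintype m] [DecidableEq m]

/-- Expansion of the quadratic form of a Hermitian matrix in its eigenbasis. -/
lemma quad_expand {M : Matrix m m ℝ} (hM : M.IsHermitian) (x : EuclideanSpace ℝ m) :
    ⟪x, Matrix.toEuclideanLin M x⟫ =
      ∑ i, hM.eigenvalues i * (⟪hM.eigenvectorBasis i, x⟫) ^ 2 := by
  set b := hM.eigenvectorBasis with hb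
  have hLb : ∀ i, Matrix.toEuclideanLin M (b i) = hM.eigenvalues i • b i := by
    intro i
    have := hM.mulVec_eigenvectorBasis i
    apply (WithLp.equiv 2 (m → ℝ)).injective
    simpa [Matrix.toEuclideanLin_apply] using this
  calc ⟪x, Matrix.toEuclideanLin M x⟫
      = ⟪x, Matrix.toEuclideanLin M (∑ i, ⟪b i, x⟫ • b i)⟫ := by rw [b.sum_repr' x]
    _ = ∑ i, hM.eigenvalues i * (⟪b i, x⟫) ^ 2 := by
        rw [map_sum, inner_sum]
        refine Finset.sum_congr rfl fun i _ => ?_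
        rw [map_smul, hLb i, real_inner_smul_right, real_inner_smul_right,
          real_inner_comm x (b i)]
        ring

/-- Parseval. -/
lemma norm_sq_expand {M : Matrix m m ℝ} (hM : M.IsHermitian) (x : EuclideanSpace ℝ m) :
    ⟪x, x⟫ = ∑ i, (⟪hM.eigenvectorBasis i, x⟫) ^ 2 := by
  have := hM.eigenvectorBasis.sum_inner_mul_inner x x
  rw [← this]
  refine Finset.sum_congr rfl fun i _ => ?_
  rw [real_inner_comm x]; ring

lemma inner_span_eq_zero {E : Type*} [NormedAddCommGroup E] [InnerProductSpace ℝ E]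
    {v : m → E} (hv : Orthonormal ℝ v) (T : Finset m)
    {x : E} (hx : x ∈ Submodule.span ℝ (v '' ↑T)) {j : m} (hj : j ∉ T) :
    ⟪v j, x⟫ = 0 := by
  have hle : Submodule.span ℝ (v '' ↑T) ≤
      LinearMap.ker ((innerSL ℝ (v j)).toLinearMap) := by
    rw [Submodule.span_le]
    rintro y ⟨i, hi, rfl⟩
    have hne : j ≠ i := by rintro rfl; exact hj hi
    simpa [LinearMap.mem_ker] using hv.2 hne
  simpa [LinearMap.mem_ker] using hle hx

lemma finrank_span_orthonormal {E : Type*} [NormedAddCommGroup E] [InnerProductSpace ℝ E]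
    {v : m → E} (hv : Orthonormal ℝ v) (T : Finset m) :
    Module.finrank ℝ (Submodule.span ℝ (v '' ↑T)) = T.card := by
  classical
  rw [Set.image_eq_range]
  have hli : LinearIndependent ℝ (fun x : (↑T : Set m) => v ↑x) :=
    hv.linearIndependent.comp Subtype.val Subtype.val_injective
  rw [finrank_span_eq_card hli]
  simp

/-- One half of Courant–Fischer: a subspace on which the quadratic form is at least
`a` times the norm square forces at least that many eigenvalues `≥ a`. -/
lemma cf_lower {M : Matrix m m ℝ} (hM : M.IsHermitian) (a : ℝ)
    (W : Submodule ℝ (EuclideanSpace ℝ m))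
    (hW : ∀ x ∈ W, a * ⟪x, x⟫ ≤ ⟪x, Matrix.toEuclideanLin M x⟫) :
    Module.finrank ℝ W ≤ (Finset.univ.filter fun i => a ≤ hM.eigenvalues i).card := by
  classical
  set b := hM.eigenvectorBasis with hb
  set T : Finset m := Finset.univ.filter (fun i => ¬ a ≤ hM.eigenvalues i) with hT
  set V₁ := Submodule.span ℝ (b '' ↑T) with hV₁
  have hV₁rank : Module.finrank ℝ V₁ = T.card := finrank_span_orthonormal b.orthonormal T
  have hdisj : Disjoint W V₁ := by
    rw [Submodule.disjoint_def]
    intro x hxW hxV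
    by_contra hx0
    have hcoef : ∀ j, j ∉ T → ⟪b j, x⟫ = 0 := fun j hj =>
      inner_span_eq_zero b.orthonormal T hxV hj
    have hex : ∃ i ∈ T, ⟪b i, x⟫ ≠ 0 := by
      by_contra hall
      push_neg at hall
      apply hx0
      rw [← b.sum_repr' x]
      refine Finset.sum_eq_zero fun i _ => ?_
      by_cases hi : i ∈ T
      · rw [hall i hi, zero_smul]
      · rw [hcoef i hi, zero_smul]
    obtain ⟨i₀, hi₀T, hi₀⟩ := hex
    have h1 : ⟪x, Matrix.toEuclideanLin M x⟫ = ∑ i ∈ T, hM.eigenvalues i * (⟪b i, x⟫) ^ 2 := by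
      rw [quad_expand hM x]
      exact (Finset.sum_subset (Finset.subset_univ T) fun i _ hi => by
        rw [hcoef i hi]; ring).symm
    have h2 : ⟪x, x⟫ = ∑ i ∈ T, (⟪b i, x⟫) ^ 2 := by
      rw [norm_sq_expand hM x]
      exact (Finset.sum_subset (Finset.subset_univ T) fun i _ hi => by
        rw [hcoef i hi]; ring).symm
    have hlt : ∑ i ∈ T, hM.eigenvalues i * (⟪b i, x⟫) ^ 2 <
        ∑ i ∈ T, a * (⟪b i, x⟫) ^ 2 := by
      refine Finset.sum_lt_sum (fun i hi => ?_) ⟨i₀, hi₀T, ?_⟩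
      · have hlti : hM.eigenvalues i < a := by
          have := Finset.mem_filter.1 hi
          exact lt_of_not_ge this.2
        exact mul_le_mul_of_nonneg_right hlti.le (sq_nonneg _)
      · have hlti : hM.eigenvalues i₀ < a := by
          have := Finset.mem_filter.1 hi₀T
          exact lt_of_not_ge this.2
        exact mul_lt_mul_of_pos_right hlti (by positivity)
    have hle := hW x hxW
    rw [h1, h2, Finset.mul_sum] at hle
    exact absurd hle (not_le.2 hlt)
  have hsum : Module.finrank ℝ W + Module.finrank ℝ V₁ ≤ Fintype.card m := by
    have := Submodule.finrank_add_finrank_le_of_disjoint hdisj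
    simpa [finrank_euclideanSpace] using this
  have hcards : (Finset.univ.filter fun i => a ≤ hM.eigenvalues i).card + T.card
      = Fintype.card m := by
    rw [hT]
    simpa using Finset.card_filter_add_card_filter_not
      (s := (Finset.univ : Finset m)) (p := fun i => a ≤ hM.eigenvalues i)
  omega

/-- On the span of eigenvectors with eigenvalue at least `a`,
the quadratic form is at least `a` times the norm square. -/
lemma quad_ge_on_span {M : Matrix m m ℝ} (hM : M.IsHermitian) (a : ℝ)
    {x : EuclideanSpace ℝ m}
    (hx : x ∈ Submodule.span ℝ
      (hM.eigenvectorBasis '' ↑(Finset.univ.filter fun i => a ≤ hM.eigenvalues i))) :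
    a * ⟪x, x⟫ ≤ ⟪x, Matrix.toEuclideanLin M x⟫ := by
  classical
  set b := hM.eigenvectorBasis with hb
  set T : Finset m := Finset.univ.filter (fun i => a ≤ hM.eigenvalues i) with hT
  have hcoef : ∀ j, j ∉ T → ⟪b j, x⟫ = 0 := fun j hj =>
    inner_span_eq_zero b.orthonormal T hx hj
  rw [quad_expand hM x, norm_sq_expand hM x, Finset.mul_sum]
  refine Finset.sum_le_sum fun i _ => ?_
  by_cases hi : i ∈ T
  · exact mul_le_mul_of_nonneg_right ((Finset.mem_filter.1 hi).2) (sq_nonneg _)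
  · rw [hcoef i hi]; simp

end Aux

section Graph

variable {n : ℕ} (s : Set (Fin n)) [Fintype ↥s]

/-- Extension by zero, as a linear map of Euclidean spaces. -/
noncomputable def extL : EuclideanSpace ℝ ↥s →ₗ[ℝ] EuclideanSpace ℝ (Fin n) where
  toFun y := WithLp.toLp 2 (fun v => if h : v ∈ s then y ⟨v, h⟩ else 0)
  map_add' y z := by
    ext v
    by_cases h : v ∈ s <;> simp [h, PiLp.add_apply]
  map_smul' c y := by
    ext v
    by_cases h : v ∈ s <;> simp [h, PiLp.smul_apply]

lemma extL_apply (y : EuclideanSpace ℝ ↥s) (v : Fin n) :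
    extL s y v = if h : v ∈ s then y ⟨v, h⟩ else 0 := rfl

lemma extL_apply_coe (y : EuclideanSpace ℝ ↥s) (i : ↥s) : extL s y ↑i = y i := by
  rw [extL_apply, dif_pos i.2]

lemma extL_injective : Function.Injective (extL s) := by
  intro y z h
  ext i
  have : extL s y ↑i = extL s z ↑i := by rw [h]
  rwa [extL_apply_coe, extL_apply_coe] at this

lemma sum_of_support_subset (F : Fin n → ℝ) (hF : ∀ v, v ∉ s → F v = 0) :
    ∑ v, F v = ∑ i : ↥s, F ↑i := by
  rw [← Finset.sum_subtype s.toFinset (fun x => Set.mem_toFinset) F]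
  exact (Finset.sum_subset (Finset.subset_univ _) fun x _ hx =>
    hF x (by simpa using hx)).symm

lemma degree_induce_le (G : SimpleGraph (Fin n)) (i : ↥s) :
    (G.induce s).degree i ≤ G.degree ↑i := by
  classical
  unfold SimpleGraph.degree
  refine Finset.card_le_card_of_injOn Subtype.val (fun j hj => ?_)
    (Subtype.val_injective.injOn)
  rw [Finset.mem_coe, SimpleGraph.mem_neighborFinset] at hj ⊢
  exact hj

lemma sLap_entry (G : SimpleGraph (Fin n)) (i j : ↥s) :
    sLap G ↑i ↑j = sLap (G.induce s) i j +
      (if i = j then ((G.degree ↑i : ℝ) - ((G.induce s).degree i : ℝ)) else 0) := by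
  classical
  by_cases h : i = j
  · subst h
    simp [sLap, Matrix.add_apply, Matrix.diagonal_apply_eq, SimpleGraph.adjMatrix_apply]
    exact (add_sub_cancel _ _).symm
  · have h' : (↑i : Fin n) ≠ ↑j := fun hc => h (Subtype.coe_injective hc)
    simp [sLap, Matrix.add_apply, Matrix.diagonal_apply_ne _ h',
      Matrix.diagonal_apply_ne _ h, h, SimpleGraph.adjMatrix_apply]

/-- The quadratic form of `sLap G` at the zero-extension dominates that of the
induced subgraph. -/
lemma quad_extL_ge (G : SimpleGraph (Fin n)) (y : EuclideanSpace ℝ ↥s) :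
    ⟪y, Matrix.toEuclideanLin (sLap (G.induce s)) y⟫ ≤
      ⟪extL s y, Matrix.toEuclideanLin (sLap G) (extL s y)⟫ := by
  classical
  -- rewrite both sides as double sums
  have lhs_eq : ⟪y, Matrix.toEuclideanLin (sLap (G.induce s)) y⟫ =
      ∑ i : ↥s, ∑ j : ↥s, y i * (sLap (G.induce s) i j * y j) := by
    simp only [Matrix.toEuclideanLin_apply, PiLp.inner_apply, RCLike.inner_apply, conj_trivial]
    refine Finset.sum_congr rfl fun i _ => ?_
    simp [Matrix.mulVec, dotProduct, Finset.mul_sum]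
    rw [Finset.sum_mul]; exact Finset.sum_congr rfl fun j _ => by ring
  have ext_mulVec : ∀ i : ↥s, Matrix.mulVec (sLap G) (WithLp.equiv 2 _ (extL s y)) ↑i =
      ∑ j : ↥s, sLap G ↑i ↑j * y j := by
    intro i
    show ∑ v, sLap G ↑i v * extL s y v = _
    rw [sum_of_support_subset s (fun v => sLap G ↑i v * extL s y v)
      (fun v hv => by simp only [extL_apply, dif_neg hv, mul_zero])]
    exact Finset.sum_congr rfl fun j _ => by rw [extL_apply_coe]
  have rhs_eq : ⟪extL s y, Matrix.toEuclideanLin (sLap G) (extL s y)⟫ =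
      ∑ i : ↥s, ∑ j : ↥s, y i * (sLap G ↑i ↑j * y j) := by
    simp only [Matrix.toEuclideanLin_apply, PiLp.inner_apply, RCLike.inner_apply, conj_trivial]
    rw [sum_of_support_subset s _ (fun v hv => by
      show _ * extL s y v = 0
      rw [extL_apply, dif_neg hv, mul_zero])]
    refine Finset.sum_congr rfl fun i _ => ?_
    show _ * extL s y ↑i = _
    rw [extL_apply_coe, show (sLap G).mulVec (extL s y).ofLp ↑i = _ from ext_mulVec i, Finset.sum_mul]
    exact Finset.sum_congr rfl fun j _ => by ring
  rw [lhs_eq, rhs_eq]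
  refine Finset.sum_le_sum fun i _ => ?_
  have hsplit : ∀ j : ↥s, y i * (sLap G ↑i ↑j * y j) =
      y i * (sLap (G.induce s) i j * y j) +
      (if j = i then ((G.degree ↑i : ℝ) - ((G.induce s).degree i : ℝ)) * y i ^ 2 else 0) := by
    intro j
    rw [sLap_entry]
    by_cases h : i = j
    · subst h; simp; ring
    · simp [h, Ne.symm h]
  rw [Finset.sum_congr rfl fun j _ => hsplit j, Finset.sum_add_distrib,
    Finset.sum_ite_eq' Finset.univ i
      (fun _ => ((G.degree ↑i : ℝ) - ((G.induce s).degree i : ℝ)) * y i ^ 2)]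
  simp only [Finset.mem_univ, if_pos]
  have hd : (0 : ℝ) ≤ ((G.degree ↑i : ℝ) - ((G.induce s).degree i : ℝ)) := by
    have := degree_induce_le s G i
    have : ((G.induce s).degree i : ℝ) ≤ (G.degree ↑i : ℝ) := by exact_mod_cast this
    linarith
  nlinarith [sq_nonneg (y i)]

end Graph

theorem stmt8 {n : ℕ} (G : SimpleGraph (Fin n)) (s : Set (Fin n))
    (hQ : (sLap G).IsHermitian) (hQH : (sLap (G.induce s)).IsHermitian) (a : ℝ) :
    (Finset.univ.filter fun i => a ≤ hQH.eigenvalues i).card ≤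
      (Finset.univ.filter fun i => a ≤ hQ.eigenvalues i).card := by
  classical
  set b := hQH.eigenvectorBasis with hb
  set T : Finset ↥s := Finset.univ.filter (fun i => a ≤ hQH.eigenvalues i) with hT
  set W₀ := Submodule.span ℝ (b '' ↑T) with hW₀
  have hW₀rank : Module.finrank ℝ W₀ = T.card := finrank_span_orthonormal b.orthonormal T
  have hmaprank : Module.finrank ℝ (W₀.map (extL s)) = T.card := by
    rw [← hW₀rank]
    exact (LinearEquiv.finrank_eq
      (Submodule.equivMapOfInjective (extL s) (extL_injective s) W₀)).symm
  calc T.card = Module.finrank ℝ (W₀.map (extL s)) := hmaprank.symm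
    _ ≤ (Finset.univ.filter fun i => a ≤ hQ.eigenvalues i).card := by
        refine cf_lower hQ a _ ?_
        rintro x hx
        obtain ⟨y, hy, rfl⟩ := Submodule.mem_map.1 hx
        have h1 : ⟪extL s y, extL s y⟫ = (⟪y, y⟫ : ℝ) := by
          simp only [PiLp.inner_apply, RCLike.inner_apply, conj_trivial]
          rw [sum_of_support_subset s _ (fun v hv => by
            show extL s y v * extL s y v = 0
            rw [extL_apply, dif_neg hv, zero_mul])]
          refine Finset.sum_congr rfl fun i _ => by
            show extL s y ↑i * extL s y ↑i = _
            rw [extL_apply_coe]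
        have h2 := quad_extL_ge s G y
        have h3 : a * ⟪y, y⟫ ≤ ⟪y, Matrix.toEuclideanLin (sLap (G.induce s)) y⟫ :=
          quad_ge_on_span hQH a hy
        rw [h1]
        linarith
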